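/- arXiv:1805.00401 — 4 statements merged into one kernel-verified Lean document; each statement's English description precedes it below -/
import Mathlib

section
/- Let L be a complete lattice and let F : L → L be an arbitrary function (no monotonicity assumption). Define the Mendler-style pre-fixed point μF := sInf {C : L | ∀ X : L, X ≤ C → F X ≤ C}. Then F (μF) ≤ μF. -/
theorem mendler_prefixed_sound {L : Type*} [CompleteLattice L] (F : L → L) :
    F (sInf {C : L | ∀ X : L, X ≤ C → F X ≤ C}) ≤
      sInf {C : L | ∀ X : L, X ≤ C → F X ≤ C} := by
  apply le_sInf
  intro C hC
  exact hC _ (sInf_le hC)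
end

section
/- Let L be a complete lattice and let F : L → L be an arbitrary function (no monotonicity assumption). Define the Mendler-style post-fixed point νF := sSup {C : L | ∀ X : L, C ≤ X → C ≤ F X}. Then νF ≤ F (νF). -/
theorem mendler_postfixed_sound {L : Type*} [CompleteLattice L] (F : L → L) :
    sSup {C : L | ∀ X : L, C ≤ X → C ≤ F X} ≤
      F (sSup {C : L | ∀ X : L, C ≤ X → C ≤ F X}) := by
  apply sSup_le
  intro C hC
  exact hC _ (le_sSup hC)
end

section
/- Let L be a complete lattice and F : L → L an arbitrary function. Then μF := sInf {C : L | ∀ X : L, X ≤ C → F X ≤ C} is itself a member of the set {C : L | ∀ X : L, X ≤ C → F X ≤ C}; that is, for every X : L with X ≤ μF one has F X ≤ μF. -/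
theorem mendler_mu_mem {L : Type*} [CompleteLattice L] (F : L → L) :
    sInf {C : L | ∀ X : L, X ≤ C → F X ≤ C} ∈ {C : L | ∀ X : L, X ≤ C → F X ≤ C} := by
  intro X hX
  apply le_sInf
  intro C hC
  exact hC X (hX.trans (sInf_le hC))
end

section
/- Let M and N be index terms of the natural-number index language. If M and N have a unifier, then they have a most general unifier: there exists a substitution σ such that subst σ M = subst σ N, and for every substitution τ with subst τ M = subst τ N there exists a substitution ρ with τ v = subst ρ (σ v) for all variables v. -/
inductive Tm (V : Type) where
  | var : V → Tm V
  | zero : Tm V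
  | succ : Tm V → Tm V

def subst {V : Type} (θ : V → Tm V) : Tm V → Tm V
  | .var u => θ u
  | .zero => .zero
  | .succ M => .succ (subst θ M)

namespace MguAux

variable {V : Type}

def iter : ℕ → Tm V → Tm V
  | 0, t => t
  | n+1, t => .succ (iter n t)

def Atm : Tm V → Prop
  | .succ _ => False
  | _ => True

theorem subst_iter (θ : V → Tm V) (n : ℕ) (t : Tm V) :
    subst θ (iter n t) = iter n (subst θ t) := by
  induction n with
  | zero => rfl
  | succ n ih => simp [iter, subst, ih]

theorem iter_add (a c : ℕ) (t : Tm V) : iter a (iter c t) = iter (a + c) t := by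
  induction a with
  | zero => simp [iter]
  | succ a ih => rw [Nat.succ_add]; simp [iter, ih]

theorem decomp (t : Tm V) : ∃ n s, Atm s ∧ t = iter n s := by
  induction t with
  | var u => exact ⟨0, .var u, trivial, rfl⟩
  | zero => exact ⟨0, .zero, trivial, rfl⟩
  | succ t ih =>
    obtain ⟨n, s, hs, rfl⟩ := ih
    exact ⟨n + 1, s, hs, rfl⟩

theorem cancel {a b : ℕ} {A B : Tm V} (hA : Atm A) (hB : Atm B)
    (h : iter a A = iter b B) : a = b ∧ A = B := by
  induction a generalizing b with
  | zero =>
    cases b with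
    | zero => exact ⟨rfl, h⟩
    | succ b =>
      rw [show iter 0 A = A from rfl] at h; subst h
      exact absurd hA (by simp [Atm, iter])
  | succ a ih =>
    cases b with
    | zero =>
      rw [show iter 0 B = B from rfl] at h; rw [← h] at hB
      exact absurd hB (by simp [Atm, iter])
    | succ b =>
      obtain ⟨h1, h2⟩ := ih (b := b) (by injection h)
      exact ⟨by omega, h2⟩

theorem iter_inj {a : ℕ} {X Y : Tm V} (h : iter a X = iter a Y) : X = Y := by
  induction a with
  | zero => exact h
  | succ a ih => exact ih (by injection h)

theorem subst_ground (θ : V → Tm V) (c : ℕ) :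
    subst θ (iter c (.zero : Tm V)) = iter c .zero := by
  rw [subst_iter]; rfl

theorem atm_zero : Atm (.zero : Tm V) := trivial

end MguAux

open MguAux in
theorem mgu_exists {V : Type} [DecidableEq V] (M N : Tm V)
    (h : ∃ θ : V → Tm V, subst θ M = subst θ N) :
    ∃ σ : V → Tm V, subst σ M = subst σ N ∧
      ∀ τ : V → Tm V, subst τ M = subst τ N →
        ∃ ρ : V → Tm V, ∀ v : V, τ v = subst ρ (σ v) := by
  suffices H : ∀ (M N : Tm V), (∃ θ : V → Tm V, subst θ M = subst θ N) →
      (∃ a b u, M = iter a (.var u) ∧ N = iter b (.zero : Tm V)) ∨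
      (∃ a b u w, u ≠ w ∧ a ≤ b ∧ M = iter a (.var u) ∧ N = iter b (.var w)) ∨
      M = N →
      ∃ σ : V → Tm V, subst σ M = subst σ N ∧
        ∀ τ : V → Tm V, subst τ M = subst τ N →
          ∃ ρ : V → Tm V, ∀ v : V, τ v = subst ρ (σ v) by
    obtain ⟨a, A, hA, rfl⟩ := decomp M
    obtain ⟨b, B, hB, rfl⟩ := decomp N
    have hsymm : ∀ (P Q : Tm V), (∃ σ : V → Tm V, subst σ P = subst σ Q ∧
        ∀ τ : V → Tm V, subst τ P = subst τ Q →
          ∃ ρ : V → Tm V, ∀ v : V, τ v = subst ρ (σ v)) →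
        (∃ σ : V → Tm V, subst σ Q = subst σ P ∧
        ∀ τ : V → Tm V, subst τ Q = subst τ P →
          ∃ ρ : V → Tm V, ∀ v : V, τ v = subst ρ (σ v)) := by
      rintro P Q ⟨σ, h1, h2⟩
      exact ⟨σ, h1.symm, fun τ ht => h2 τ ht.symm⟩
    cases A with
    | succ _ => exact absurd hA (by simp [Atm])
    | zero =>
      cases B with
      | succ _ => exact absurd hB (by simp [Atm])
      | zero =>
        obtain ⟨θ, hθ⟩ := h
        rw [subst_ground, subst_ground] at hθ
        obtain ⟨rfl, -⟩ := cancel atm_zero atm_zero hθ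
        exact H _ _ ⟨θ, rfl⟩ (Or.inr (Or.inr rfl))
      | var w =>
        apply hsymm
        refine H _ _ ?_ (Or.inl ⟨b, a, w, rfl, rfl⟩)
        obtain ⟨θ, hθ⟩ := h
        exact ⟨θ, hθ.symm⟩
    | var u =>
      cases B with
      | succ _ => exact absurd hB (by simp [Atm])
      | zero => exact H _ _ h (Or.inl ⟨a, b, u, rfl, rfl⟩)
      | var w =>
        by_cases huw : u = w
        · subst huw
          obtain ⟨θ, hθ⟩ := h
          rw [subst_iter, subst_iter] at hθ
          obtain ⟨c, C, hC, hc⟩ := decomp (θ u)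
          rw [show subst θ (.var u) = θ u from rfl, hc, iter_add, iter_add] at hθ
          obtain ⟨hab, -⟩ := cancel hC hC hθ
          have : a = b := by omega
          subst this
          exact H _ _ ⟨θ, rfl⟩ (Or.inr (Or.inr rfl))
        · rcases Nat.le_total a b with hab | hab
          · exact H _ _ h (Or.inr (Or.inl ⟨a, b, u, w, huw, hab, rfl, rfl⟩))
          · apply hsymm
            refine H _ _ ?_ (Or.inr (Or.inl ⟨b, a, w, u, Ne.symm huw, hab, rfl, rfl⟩))
            obtain ⟨θ, hθ⟩ := h
            exact ⟨θ, hθ.symm⟩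
  rintro M N h (⟨a, b, u, rfl, rfl⟩ | ⟨a, b, u, w, huw, hab, rfl, rfl⟩ | rfl)
  · -- var vs zero
    obtain ⟨θ, hθ⟩ := h
    rw [subst_iter, subst_iter] at hθ
    obtain ⟨c, C, hC, hc⟩ := decomp (θ u)
    rw [show subst θ (.var u) = θ u from rfl, hc, iter_add,
        show subst θ (.zero : Tm V) = .zero from rfl] at hθ
    obtain ⟨hac, hCz⟩ := cancel hC atm_zero hθ
    subst hCz
    refine ⟨Function.update (fun v => (.var v : Tm V)) u (iter c .zero), ?_, ?_⟩
    · rw [subst_iter, subst_ground]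
      rw [show subst (Function.update (fun v => (.var v : Tm V)) u (iter c .zero)) (.var u)
          = iter c .zero from by simp [subst]]
      rw [iter_add, hac]
    · intro τ hτ
      refine ⟨τ, fun v => ?_⟩
      by_cases hv : v = u
      · subst hv
        rw [Function.update_self, subst_ground]
        rw [subst_iter, subst_iter, show subst τ (.var v) = τ v from rfl,
            show subst τ (.zero : Tm V) = .zero from rfl, ← hac, ← iter_add] at hτ
        exact iter_inj hτ
      · rw [Function.update_of_ne hv]; rfl
  · -- var vs var, distinct, a ≤ b
    refine ⟨Function.update (fun v => (.var v : Tm V)) u (iter (b - a) (.var w)), ?_, ?_⟩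
    · rw [subst_iter, subst_iter]
      rw [show subst (Function.update (fun v => (.var v : Tm V)) u (iter (b-a) (.var w))) (.var u)
          = iter (b-a) (.var w) from by simp [subst]]
      rw [show subst (Function.update (fun v => (.var v : Tm V)) u (iter (b-a) (.var w))) (.var w)
          = .var w from by simp [subst, Function.update_of_ne (Ne.symm huw)]]
      rw [iter_add]
      congr 1; omega
    · intro τ hτ
      refine ⟨τ, fun v => ?_⟩
      by_cases hv : v = u
      · subst hv
        rw [Function.update_self, subst_iter, show subst τ (.var w) = τ w from rfl]
        rw [subst_iter, subst_iter, show subst τ (.var v) = τ v from rfl,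
            show subst τ (.var w) = τ w from rfl,
            show b = a + (b - a) by omega, ← iter_add] at hτ
        exact iter_inj hτ
      · rw [Function.update_of_ne hv]; rfl
  · exact ⟨fun v => .var v, rfl, fun τ _ => ⟨τ, fun v => rfl⟩⟩
end
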